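/- Let a finite MDP (S, A, T, μ, γ) be given and let ρ : S × A → ℝ satisfy the Bellman flow constraints: ρ(s,a) ≥ 0 for all (s,a), and ∑_{a∈A} ρ(s,a) = μ(s) + γ·∑_{s'∈S, a'∈A} T(s|s',a')·ρ(s',a') for all s ∈ S. Assume ∑_{a∈A} ρ(s,a) > 0 for every s, and define the stationary policy π(a|s) := ρ(s,a) / ∑_{a'∈A} ρ(s,a'). Then ρ is exactly the occupancy measure of π, i.e. ρ_π(s,a) = ρ(s,a) for all (s,a). -/
import Mathlib


open scoped BigOperators

/-- The time-`t` state-action distribution of a stationary policy `π` in a finite MDP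
with transition kernel `T` (with `T s a s'` the probability of moving to `s'` from `(s,a)`)
and initial state distribution `μ`:
`P_π^0(s,a) = μ(s)·π(a|s)` and `P_π^{t+1}(s,a) = π(a|s)·∑_{s',a'} T(s|s',a')·P_π^t(s',a')`. -/
noncomputable def stepDist {S A : Type} [Fintype S] [Fintype A]
    (T : S → A → S → ℝ) (μ : S → ℝ) (π : S → A → ℝ) : ℕ → S → A → ℝ
  | 0 => fun s a => μ s * π s a
  | (t + 1) => fun s a => π s a * ∑ s' : S, ∑ a' : A, T s' a' s * stepDist T μ π t s' a'

/-- The (discounted) occupancy measure of a stationary policy `π`: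
`ρ_π(s,a) = ∑_{t=0}^∞ γ^t · P_π^t(s,a)`. -/
noncomputable def occupancy {S A : Type} [Fintype S] [Fintype A]
    (T : S → A → S → ℝ) (μ : S → ℝ) (γ : ℝ) (π : S → A → ℝ) (s : S) (a : A) : ℝ :=
  ∑' t : ℕ, γ ^ t * stepDist T μ π t s a

/-- State marginal evolution: `d_0 = d0`, `d_{t+1}(s) = ∑_{s',a'} T(s|s',a') π(a'|s') d_t(s')`. -/
noncomputable def stateDist {S A : Type} [Fintype S] [Fintype A]
    (T : S → A → S → ℝ) (π : S → A → ℝ) (d0 : S → ℝ) : ℕ → S → ℝ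
  | 0 => d0
  | (t + 1) => fun s => ∑ s' : S, ∑ a' : A, T s' a' s * (π s' a' * stateDist T π d0 t s')

lemma stepDist_eq_stateDist {S A : Type} [Fintype S] [Fintype A]
    (T : S → A → S → ℝ) (μ : S → ℝ) (π : S → A → ℝ) :
    ∀ t s a, stepDist T μ π t s a = π s a * stateDist T π μ t s := by
  intro t
  induction t with
  | zero => intro s a; simp [stepDist, stateDist, mul_comm]
  | succ t ih =>
    intro s a
    simp only [stepDist, stateDist]
    congr 1
    refine Finset.sum_congr rfl fun s' _ => Finset.sum_congr rfl fun a' _ => ?_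
    rw [ih]

theorem bellman_flow_is_occupancy
    {S A : Type} [Fintype S] [Nonempty S] [Fintype A] [Nonempty A]
    (T : S → A → S → ℝ) (μ : S → ℝ) (γ : ℝ)
    (hT_nonneg : ∀ s a s', 0 ≤ T s a s')
    (hT_sum : ∀ s a, ∑ s' : S, T s a s' = 1)
    (hμ_nonneg : ∀ s, 0 ≤ μ s) (hμ_sum : ∑ s : S, μ s = 1)
    (hγ0 : 0 ≤ γ) (hγ1 : γ < 1)
    (ρ : S → A → ℝ)
    (hρ_nonneg : ∀ s a, 0 ≤ ρ s a)
    (hρ_flow : ∀ s, ∑ a : A, ρ s a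
        = μ s + γ * ∑ s' : S, ∑ a' : A, T s' a' s * ρ s' a')
    (hρ_pos : ∀ s, 0 < ∑ a : A, ρ s a) :
    ∀ s a, occupancy T μ γ (fun s a => ρ s a / ∑ a' : A, ρ s a') s a = ρ s a := by
  set R : S → ℝ := fun s => ∑ a : A, ρ s a with hR
  set π : S → A → ℝ := fun s a => ρ s a / R s with hπ
  have hπ_nonneg : ∀ s a, 0 ≤ π s a := fun s a =>
    div_nonneg (hρ_nonneg s a) (hρ_pos s).le
  have hπR : ∀ s a, π s a * R s = ρ s a := fun s a =>
    div_mul_cancel₀ _ (hρ_pos s).ne'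
  have hπ_sum : ∀ s, ∑ a : A, π s a = 1 := by
    intro s
    simp only [hπ, ← Finset.sum_div]
    exact div_self (hρ_pos s).ne'
  -- aggregated kernel
  set c : S → S → ℝ := fun s' s => ∑ a' : A, T s' a' s * π s' a' with hc
  have hc_nonneg : ∀ s' s, 0 ≤ c s' s := fun s' s =>
    Finset.sum_nonneg fun a' _ => mul_nonneg (hT_nonneg _ _ _) (hπ_nonneg _ _)
  have hF : ∀ (d : S → ℝ) (s : S),
      (∑ s' : S, ∑ a' : A, T s' a' s * (π s' a' * d s')) = ∑ s' : S, c s' s * d s' := by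
    intro d s
    refine Finset.sum_congr rfl fun s' _ => ?_
    rw [hc, Finset.sum_mul]
    exact Finset.sum_congr rfl fun a' _ => by ring
  have hc_col : ∀ s', ∑ s : S, c s' s = 1 := by
    intro s'
    rw [hc]
    calc ∑ s : S, ∑ a' : A, T s' a' s * π s' a'
        = ∑ a' : A, ∑ s : S, T s' a' s * π s' a' := Finset.sum_comm
      _ = ∑ a' : A, π s' a' := by
          refine Finset.sum_congr rfl fun a' _ => ?_
          rw [← Finset.sum_mul, hT_sum, one_mul]
      _ = 1 := hπ_sum s'
  -- flow in terms of R
  have hflowR : ∀ s, R s = μ s + γ * ∑ s' : S, c s' s * R s' := by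
    intro s
    have h2 : (∑ s' : S, ∑ a' : A, T s' a' s * (π s' a' * R s'))
        = ∑ s' : S, ∑ a' : A, T s' a' s * ρ s' a' :=
      Finset.sum_congr rfl fun s' _ => Finset.sum_congr rfl fun a' _ => by rw [hπR]
    rw [← hF, h2]
    exact hρ_flow s
  -- nonnegativity and mass of stateDist with d0 = R
  have hdR_nonneg : ∀ N s, 0 ≤ stateDist T π R N s := by
    intro N
    induction N with
    | zero => intro s; exact Finset.sum_nonneg fun a _ => hρ_nonneg s a
    | succ N ih =>
      intro s
      exact Finset.sum_nonneg fun s' _ => Finset.sum_nonneg fun a' _ =>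
        mul_nonneg (hT_nonneg _ _ _) (mul_nonneg (hπ_nonneg _ _) (ih s'))
  set M : ℝ := ∑ s : S, R s with hM
  have hdR_mass : ∀ N, ∑ s : S, stateDist T π R N s = M := by
    intro N
    induction N with
    | zero => rfl
    | succ N ih =>
      calc ∑ s : S, stateDist T π R (N + 1) s
          = ∑ s : S, ∑ s' : S, c s' s * stateDist T π R N s' :=
            Finset.sum_congr rfl fun s _ => hF _ s
        _ = ∑ s' : S, ∑ s : S, c s' s * stateDist T π R N s' := Finset.sum_comm
        _ = ∑ s' : S, (∑ s : S, c s' s) * stateDist T π R N s' :=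
            Finset.sum_congr rfl fun s' _ => (Finset.sum_mul _ _ _).symm
        _ = M := by simp only [hc_col, one_mul]; exact ih
  have hdR_le : ∀ N s, stateDist T π R N s ≤ M := by
    intro N s
    rw [← hdR_mass N]
    exact Finset.single_le_sum (fun s' _ => hdR_nonneg N s') (Finset.mem_univ s)
  have hdμ_nonneg : ∀ N s, 0 ≤ stateDist T π μ N s := by
    intro N
    induction N with
    | zero => intro s; exact hμ_nonneg s
    | succ N ih =>
      intro s
      exact Finset.sum_nonneg fun s' _ => Finset.sum_nonneg fun a' _ =>
        mul_nonneg (hT_nonneg _ _ _) (mul_nonneg (hπ_nonneg _ _) (ih s'))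
  -- key partial sum identity
  have key : ∀ N s, ∑ t ∈ Finset.range N, γ ^ t * stateDist T π μ t s
      = R s - γ ^ N * stateDist T π R N s := by
    intro N
    induction N with
    | zero => intro s; simp [stateDist]
    | succ N ih =>
      intro s
      rw [Finset.sum_range_succ']
      have h1 : ∀ t, γ ^ (t + 1) * stateDist T π μ (t + 1) s
          = γ * (γ ^ t * (∑ s' : S, c s' s * stateDist T π μ t s')) := by
        intro t
        rw [show stateDist T π μ (t + 1) s
            = ∑ s' : S, ∑ a' : A, T s' a' s * (π s' a' * stateDist T π μ t s') from rfl,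
          hF]
        ring
      have hswap : ∑ t ∈ Finset.range N, γ ^ t * ∑ s' : S, c s' s * stateDist T π μ t s'
          = ∑ s' : S, c s' s * ∑ t ∈ Finset.range N, γ ^ t * stateDist T π μ t s' := by
        calc ∑ t ∈ Finset.range N, γ ^ t * ∑ s' : S, c s' s * stateDist T π μ t s'
            = ∑ t ∈ Finset.range N, ∑ s' : S, c s' s * (γ ^ t * stateDist T π μ t s') := by
              refine Finset.sum_congr rfl fun t _ => ?_
              rw [Finset.mul_sum]
              exact Finset.sum_congr rfl fun s' _ => by ring
          _ = ∑ s' : S, ∑ t ∈ Finset.range N, c s' s * (γ ^ t * stateDist T π μ t s') :=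
              Finset.sum_comm
          _ = ∑ s' : S, c s' s * ∑ t ∈ Finset.range N, γ ^ t * stateDist T π μ t s' :=
              Finset.sum_congr rfl fun s' _ => (Finset.mul_sum _ _ _).symm
      have hsplit : ∑ s' : S, c s' s * (R s' - γ ^ N * stateDist T π R N s')
          = (∑ s' : S, c s' s * R s') - γ ^ N * ∑ s' : S, c s' s * stateDist T π R N s' := by
        rw [Finset.mul_sum, ← Finset.sum_sub_distrib]
        exact Finset.sum_congr rfl fun s' _ => by ring
      have hdR1 : stateDist T π R (N + 1) s = ∑ s' : S, c s' s * stateDist T π R N s' :=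
        hF _ s
      calc (∑ t ∈ Finset.range N, γ ^ (t + 1) * stateDist T π μ (t + 1) s)
            + γ ^ 0 * stateDist T π μ 0 s
          = μ s + γ * ∑ t ∈ Finset.range N,
              γ ^ t * ∑ s' : S, c s' s * stateDist T π μ t s' := by
            simp only [h1, pow_zero, one_mul]
            rw [show stateDist T π μ 0 s = μ s from rfl, ← Finset.mul_sum]
            ring
        _ = μ s + γ * ∑ s' : S, c s' s * (R s' - γ ^ N * stateDist T π R N s') := by
            rw [hswap]
            congr 2
            exact Finset.sum_congr rfl fun s' _ => by rw [ih]
        _ = R s - γ ^ (N + 1) * stateDist T π R (N + 1) s := by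
            rw [hsplit, hdR1, hflowR s]; ring
  -- convergence of partial sums
  have hasSumR : ∀ s, HasSum (fun t => γ ^ t * stateDist T π μ t s) (R s) := by
    intro s
    rw [hasSum_iff_tendsto_nat_of_nonneg
      (fun t => mul_nonneg (pow_nonneg hγ0 t) (hdμ_nonneg t s))]
    have hlim : Filter.Tendsto (fun N => γ ^ N * stateDist T π R N s)
        Filter.atTop (nhds 0) := by
      apply squeeze_zero (fun N => mul_nonneg (pow_nonneg hγ0 N) (hdR_nonneg N s))
        (fun N => mul_le_mul_of_nonneg_left (hdR_le N s) (pow_nonneg hγ0 N))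
      have : Filter.Tendsto (fun N : ℕ => γ ^ N * M) Filter.atTop (nhds (0 * M)) :=
        (tendsto_pow_atTop_nhds_zero_of_lt_one hγ0 hγ1).mul_const M
      simpa using this
    have := Filter.Tendsto.const_sub (R s) hlim
    simp only [sub_zero] at this
    simp only [key]
    exact this
  intro s a
  have hterm : ∀ t : ℕ, γ ^ t * stepDist T μ π t s a
      = π s a * (γ ^ t * stateDist T π μ t s) := by
    intro t
    rw [stepDist_eq_stateDist]
    ring
  have h := (hasSumR s).mul_left (π s a)
  rw [occupancy]
  calc (∑' t : ℕ, γ ^ t * stepDist T μ π t s a)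
      = ∑' t : ℕ, π s a * (γ ^ t * stateDist T π μ t s) := by
        exact tsum_congr hterm
    _ = π s a * R s := h.tsum_eq
    _ = ρ s a := hπR s a
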